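/- Let h̃_1, …, h̃_n be frequency histograms with d bins (each h̃_j^i > 0 and Σ_{i=1}^d h̃_j^i = 1) and π_1, …, π_n > 0 weights with Σ_j π_j = 1. Let a^i = Σ_{j=1}^n π_j h̃_j^i and g^i = Π_{j=1}^n (h̃_j^i)^{π_j}, and let c ∈ (0,∞)^d be defined coordinate-wise as the unique positive solution of log(c^i/g^i) + 1 = a^i/c^i (the Jeffreys positive centroid). Then the cumulative sum w_c = Σ_{i=1}^d c^i satisfies 0 < w_c ≤ 1. -/
import Mathlib


open scoped BigOperators

/-- for frequency histograms, the cumulative sum `w_c` of the Jeffreys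
positive centroid (characterized coordinate-wise by `log(cⁱ/gⁱ) + 1 = aⁱ/cⁱ`)
satisfies `0 < w_c ≤ 1`. -/
theorem jeffreys_positive_centroid_mass_le_one
    (d n : ℕ) (h : Fin n → Fin d → ℝ) (π : Fin n → ℝ)
    (hpos : ∀ j i, 0 < h j i) (hfreq : ∀ j, ∑ i, h j i = 1)
    (hπ : ∀ j, 0 < π j) (hπ1 : ∑ j, π j = 1)
    (c : Fin d → ℝ) (hc : ∀ i, 0 < c i)
    (hcent : ∀ i, Real.log (c i / ∏ j, h j i ^ π j) + 1 = (∑ j, π j * h j i) / c i) :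
    0 < ∑ i, c i ∧ ∑ i, c i ≤ 1 := by
  -- n > 0
  rcases Nat.eq_zero_or_pos n with hn | hn
  · subst hn; simp at hπ1
  -- d > 0
  rcases Nat.eq_zero_or_pos d with hd | hd
  · subst hd
    obtain ⟨j⟩ := Fin.pos_iff_nonempty.mp hn
    have := hfreq j
    simp at this
  have hkey : ∀ i, c i ≤ ∑ j, π j * h j i := by
    intro i
    by_contra hlt
    push_neg at hlt
    set a := ∑ j, π j * h j i with ha
    set g := ∏ j, h j i ^ π j with hg
    have hgpos : 0 < g := Finset.prod_pos fun j _ =>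
      Real.rpow_pos_of_pos (hpos j i) _
    have hga : g ≤ a :=
      Real.geom_mean_le_arith_mean_weighted Finset.univ π (fun j => h j i)
        (fun j _ => (hπ j).le) hπ1 (fun j _ => (hpos j i).le)
    have hapos : 0 < a := lt_of_lt_of_le hgpos hga
    have h1 : a / c i < 1 := (div_lt_one (hc i)).mpr hlt
    have h2 : Real.log (c i / g) < 0 := by
      have := hcent i
      linarith
    have h3 : c i / g < 1 := by
      by_contra hge
      push_neg at hge
      exact absurd (Real.log_nonneg hge) (not_le.mpr h2)
    have h4 : c i < g := (div_lt_one hgpos).mp h3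
    linarith
  constructor
  · exact Finset.sum_pos (fun i _ => hc i) ⟨⟨0, hd⟩, Finset.mem_univ _⟩
  · calc ∑ i, c i ≤ ∑ i, ∑ j, π j * h j i := Finset.sum_le_sum fun i _ => hkey i
      _ = ∑ j, π j * ∑ i, h j i := by
          rw [Finset.sum_comm]; simp [Finset.mul_sum]
      _ = 1 := by simp [hfreq, hπ1]
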